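/- Let e and m be positive integers and let d be an integer with d ≥ (e−1)(2m+1)+1. Let A be a finite set of size d and let g be a function from A to subsets of A such that |g(a)| ≤ m for all a ∈ A. Then there exists a subset B of A of size e such that j ∉ g(i) for all distinct i, j ∈ B. -/

import Mathlib

private lemma aux_avoid {α : Type*} [DecidableEq α] (m : ℕ) (g : α → Finset α) :
    ∀ (e : ℕ) (A : Finset α), e * (2 * m + 1) < A.card → (∀ a ∈ A, (g a).card ≤ m) →
      ∃ B ⊆ A, B.card = e + 1 ∧ ∀ i ∈ B, ∀ j ∈ B, i ≠ j → j ∉ g i := by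
  intro e
  induction e with
  | zero =>
    intro A hcard _
    obtain ⟨a, ha⟩ := Finset.card_pos.mp (by simpa using hcard)
    exact ⟨{a}, by simpa using ha, by simp, by simp⟩
  | succ e ih =>
    intro A hcard hg
    have hApos : 0 < A.card := by nlinarith
    -- find a with in-degree ≤ m within A
    have hsum : ∑ a ∈ A, (A.filter (fun j => a ∈ g j)).card ≤ m * A.card := by
      have h1 : ∀ a ∈ A, (A.filter (fun j => a ∈ g j)).card
          = ∑ j ∈ A, if a ∈ g j then 1 else 0 := by
        intro a _; rw [Finset.card_filter]
      calc ∑ a ∈ A, (A.filter (fun j => a ∈ g j)).card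
          = ∑ a ∈ A, ∑ j ∈ A, if a ∈ g j then 1 else 0 := Finset.sum_congr rfl h1
        _ = ∑ j ∈ A, ∑ a ∈ A, if a ∈ g j then 1 else 0 := Finset.sum_comm
        _ = ∑ j ∈ A, (A.filter (fun a => a ∈ g j)).card := by
            refine Finset.sum_congr rfl fun j _ => ?_
            rw [Finset.card_filter]
        _ ≤ ∑ j ∈ A, m := Finset.sum_le_sum fun j hj =>
            le_trans (Finset.card_le_card fun a ha => (Finset.mem_filter.mp ha).2) (hg j hj)
        _ = m * A.card := by rw [Finset.sum_const, smul_eq_mul, mul_comm]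
    have ⟨a, haA, ha⟩ : ∃ a ∈ A, (A.filter (fun j => a ∈ g j)).card ≤ m := by
      by_contra hcon
      push_neg at hcon
      have : A.card * (m + 1) ≤ ∑ a ∈ A, (A.filter (fun j => a ∈ g j)).card := by
        have := Finset.card_nsmul_le_sum A (fun a => (A.filter (fun j => a ∈ g j)).card)
          (m + 1) (fun a haa => hcon a haa)
        simpa [smul_eq_mul] using this
      nlinarith
    set bad : Finset α := insert a (g a ∪ A.filter (fun j => a ∈ g j)) with hbad
    have hbadcard : bad.card ≤ 2 * m + 1 := by
      calc bad.card ≤ (g a ∪ A.filter (fun j => a ∈ g j)).card + 1 :=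
            Finset.card_insert_le _ _
        _ ≤ ((g a).card + (A.filter (fun j => a ∈ g j)).card) + 1 := by
            exact Nat.add_le_add_right (Finset.card_union_le _ _) 1
        _ ≤ 2 * m + 1 := by have := hg a haA; omega
    set A' := A \ bad with hA'
    have hA'sub : A' ⊆ A := Finset.sdiff_subset
    have hA'card : e * (2 * m + 1) < A'.card := by
      have := Finset.le_card_sdiff bad A
      have h2 : A.card - bad.card ≤ A'.card := by
        rw [hA']; exact Finset.le_card_sdiff bad A
      have h3 : (e + 1) * (2 * m + 1) = e * (2 * m + 1) + (2 * m + 1) := by ring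
      omega
    obtain ⟨B', hB'sub, hB'card, hB'cond⟩ := ih A' hA'card (fun x hx => hg x (hA'sub hx))
    have haB' : a ∉ B' := fun h => by
      have := hB'sub h
      rw [hA', Finset.mem_sdiff] at this
      exact this.2 (Finset.mem_insert_self a _)
    refine ⟨insert a B', ?_, ?_, ?_⟩
    · exact Finset.insert_subset haA (hB'sub.trans hA'sub)
    · rw [Finset.card_insert_of_notMem haB', hB'card]
    · intro i hi j hj hij
      rcases Finset.mem_insert.mp hi with rfl | hi' <;>
        rcases Finset.mem_insert.mp hj with rfl | hj'
      · exact absurd rfl hij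
      · -- i = a, j ∈ B' : j ∉ g a since j ∈ A'
        have := hB'sub hj'
        rw [hA', Finset.mem_sdiff, hbad] at this
        intro hjg
        exact this.2 (Finset.mem_insert_of_mem (Finset.mem_union_left _ hjg))
      · -- j = a, i ∈ B' : a ∉ g i since i ∈ A' not in filter
        have hiA' := hB'sub hi'
        rw [hA', Finset.mem_sdiff, hbad] at hiA'
        intro hag
        exact hiA'.2 (Finset.mem_insert_of_mem (Finset.mem_union_right _
          (Finset.mem_filter.mpr ⟨hiA'.1, hag⟩)))
      · exact hB'cond i hi' j hj' hij

/-- If `d ≥ (e-1)(2m+1)+1` and each element of a finite set `A` of size `d` is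
associated with a subset of `A` of size at most `m`, then there are `e`
elements of `A`, each of which belongs to none of the subsets associated with
the other `e - 1` elements. -/
theorem exists_subset_avoiding {α : Type*} [DecidableEq α]
    (e m d : ℕ) (he : 0 < e) (hm : 0 < m) (hd : (e - 1) * (2 * m + 1) + 1 ≤ d)
    (A : Finset α) (hA : A.card = d)
    (g : α → Finset α) (hg₁ : ∀ a ∈ A, g a ⊆ A) (hg₂ : ∀ a ∈ A, (g a).card ≤ m) :
    ∃ B ⊆ A, B.card = e ∧ ∀ i ∈ B, ∀ j ∈ B, i ≠ j → j ∉ g i := by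
  obtain ⟨e', rfl⟩ : ∃ e', e = e' + 1 := ⟨e - 1, by omega⟩
  have h0 : e' + 1 - 1 = e' := rfl
  rw [h0] at hd
  have : e' * (2 * m + 1) < A.card := by rw [hA]; omega
  exact aux_avoid m g e' A this hg₂
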